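/- Let n ≥ 2 and suppose π_0, π_1, ..., π_{m−1}, π_0 is a cyclic sequence of distinct permutations of {1,...,n} in which consecutive permutations differ by a single adjacent transposition, and such that every nonempty proper subset of {1,...,n} occurs as a prefix-set of the permutations in exactly one nonempty contiguous cyclic interval of the sequence. Then m = 2^n − 2. -/

import Mathlib

/-- Two permutations of `Fin n` differ by a single adjacent transposition. -/
def AdjSwap (n : ℕ) (π σ : Equiv.Perm (Fin n)) : Prop :=
  ∃ (k : ℕ) (hk : k + 1 < n),
    σ = π * Equiv.swap (⟨k, Nat.lt_of_succ_lt hk⟩ : Fin n) ⟨k + 1, hk⟩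

/-- The prefix-set of size `k` of a permutation `π`. -/
def prefixSet {n : ℕ} (π : Equiv.Perm (Fin n)) (k : ℕ) : Finset (Fin n) :=
  (Finset.univ.filter fun i : Fin n => (i : ℕ) < k).image π

lemma prefixSet_eq_filter {n : ℕ} (π : Equiv.Perm (Fin n)) (t : ℕ) :
    prefixSet π t = Finset.univ.filter (fun x : Fin n => ((π.symm x : Fin n) : ℕ) < t) := by
  ext x
  simp only [prefixSet, Finset.mem_image, Finset.mem_filter, Finset.mem_univ, true_and]
  constructor
  · rintro ⟨i, hi, rfl⟩; simpa using hi
  · intro h; exact ⟨π.symm x, h, by simp⟩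

lemma card_prefixSet {n : ℕ} (π : Equiv.Perm (Fin n)) {t : ℕ} (ht : t ≤ n) :
    (prefixSet π t).card = t := by
  rw [prefixSet_eq_filter]
  rw [Finset.card_filter]
  rw [Equiv.sum_comp π.symm (fun y => if ((y : Fin n) : ℕ) < t then (1:ℕ) else 0)]
  rw [← Finset.card_filter]
  have : (Finset.univ.filter fun y : Fin n => (y : ℕ) < t) =
      (Finset.range t).attachFin (fun i hi => lt_of_lt_of_le (Finset.mem_range.mp hi) ht) := by
    ext y
    simp [Finset.mem_attachFin]
  rw [this, Finset.card_attachFin, Finset.card_range]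

lemma swap_val_lt {n k t : ℕ} (hk : k + 1 < n) (ht : t ≠ k + 1) (y : Fin n) :
    ((Equiv.swap (⟨k, Nat.lt_of_succ_lt hk⟩ : Fin n) ⟨k + 1, hk⟩ y : Fin n) : ℕ) < t ↔
    (y : ℕ) < t := by
  rcases eq_or_ne y ⟨k, Nat.lt_of_succ_lt hk⟩ with rfl | h1
  · rw [Equiv.swap_apply_left]; simp; omega
  · rcases eq_or_ne y ⟨k + 1, hk⟩ with rfl | h2
    · rw [Equiv.swap_apply_right]; simp; omega
    · rw [Equiv.swap_apply_of_ne_of_ne h1 h2]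

lemma prefixSet_mul_swap_eq {n : ℕ} (π : Equiv.Perm (Fin n)) {k : ℕ} (hk : k + 1 < n)
    {t : ℕ} (ht : t ≠ k + 1) :
    prefixSet (π * Equiv.swap (⟨k, Nat.lt_of_succ_lt hk⟩ : Fin n) ⟨k + 1, hk⟩) t =
    prefixSet π t := by
  rw [prefixSet_eq_filter, prefixSet_eq_filter]
  ext x
  simp only [Finset.mem_filter, Finset.mem_univ, true_and]
  simp only [Equiv.Perm.mul_def,
    Equiv.symm_trans_apply, Equiv.symm_swap]
  exact swap_val_lt hk ht _

lemma prefixSet_mul_swap_ne {n : ℕ} (π : Equiv.Perm (Fin n)) {k : ℕ} (hk : k + 1 < n) :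
    prefixSet (π * Equiv.swap (⟨k, Nat.lt_of_succ_lt hk⟩ : Fin n) ⟨k + 1, hk⟩) (k + 1) ≠
    prefixSet π (k + 1) := by
  intro h
  have hx : π ⟨k, Nat.lt_of_succ_lt hk⟩ ∈ prefixSet π (k + 1) := by
    rw [prefixSet_eq_filter]; simp
  rw [← h, prefixSet_eq_filter] at hx
  simp only [Finset.mem_filter, Finset.mem_univ, true_and] at hx
  simp only [Equiv.Perm.mul_def,
    Equiv.symm_trans_apply, Equiv.symm_swap, Equiv.symm_apply_apply,
    Equiv.swap_apply_left] at hx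
  omega

lemma endpoint_succ_not_mem {m : ℕ} [NeZero m] (a : ZMod m) {len : ℕ} (h1 : 1 ≤ len)
    (h2 : len < m) : ¬ ∃ i : ℕ, i < len ∧ (a + ((len - 1 : ℕ) : ZMod m)) + 1 = a + i := by
  rintro ⟨i, hi, he⟩
  have h3 : ((len - 1 + 1 : ℕ) : ZMod m) = (i : ZMod m) := by
    push_cast
    have := add_right_cancel (b := a) (by linear_combination he : ((len-1:ℕ):ZMod m) + 1 + a = (i : ZMod m) + a)
    exact this
  rw [Nat.sub_add_cancel h1] at h3
  have := congrArg ZMod.val h3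
  rw [ZMod.val_cast_of_lt h2, ZMod.val_cast_of_lt (hi.trans h2)] at this
  omega

lemma mem_not_succ_eq_endpoint {m : ℕ} (a j : ZMod m) {len : ℕ}
    (hj : ∃ i : ℕ, i < len ∧ j = a + i) (hj1 : ¬ ∃ i : ℕ, i < len ∧ j + 1 = a + i) :
    j = a + ((len - 1 : ℕ) : ZMod m) := by
  obtain ⟨i, hi, rfl⟩ := hj
  have h2 : ¬ (i + 1 < len) := fun h => hj1 ⟨i + 1, h, by push_cast; ring⟩
  have : i = len - 1 := by omega
  rw [this]

lemma card_nonempty_proper (n : ℕ) (hn : 1 ≤ n) :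
    Fintype.card {S : Finset (Fin n) // S.Nonempty ∧ S ≠ Finset.univ} = 2 ^ n - 2 := by
  classical
  rw [Fintype.card_subtype]
  have h0 : (∅ : Finset (Fin n)) ≠ Finset.univ := by
    intro h
    have : (⟨0, hn⟩ : Fin n) ∈ (∅ : Finset (Fin n)) := h ▸ Finset.mem_univ _
    simp at this
  have he : (Finset.univ.filter fun S : Finset (Fin n) => S.Nonempty ∧ S ≠ Finset.univ) =
      Finset.univ \ {∅, Finset.univ} := by
    ext S
    simp [Finset.nonempty_iff_ne_empty, and_comm]
  rw [he, Finset.card_sdiff_of_subset (Finset.subset_univ _)]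
  rw [Finset.card_insert_of_notMem (by simpa using h0), Finset.card_singleton]
  rw [Finset.card_univ, Fintype.card_finset, Fintype.card_fin]

/-- A facet-Hamiltonian cycle of the permutahedron has length exactly `2^n - 2`:
a cyclic sequence of distinct permutations of `{1,…,n}`, consecutive ones differing by an
adjacent transposition, in which every nonempty proper subset occurs as a prefix-set on
exactly one nonempty contiguous cyclic interval, has `2^n - 2` terms. -/
theorem facet_hamiltonian_cycle_length (n m : ℕ) (hn : 2 ≤ n) (hm : 1 ≤ m)
    (π : ZMod m → Equiv.Perm (Fin n))
    (hdistinct : Function.Injective π)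
    (hadj : ∀ j, AdjSwap n (π j) (π (j + 1)))
    (hint : ∀ S : Finset (Fin n), S.Nonempty → S ≠ Finset.univ →
      ∃ (a : ZMod m) (len : ℕ), 1 ≤ len ∧ len ≤ m ∧
        ∀ j, prefixSet (π j) S.card = S ↔ ∃ i : ℕ, i < len ∧ j = a + (i : ZMod m)) :
    m = 2 ^ n - 2 := by
  classical
  haveI : NeZero m := ⟨by omega⟩
  -- every nonempty proper S has a unique "endpoint" where its interval ends
  have key : ∀ S : Finset (Fin n), S.Nonempty → S ≠ Finset.univ →
      ∃ e : ZMod m, (prefixSet (π e) S.card = S ∧ prefixSet (π (e + 1)) S.card ≠ S) ∧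
        ∀ j, prefixSet (π j) S.card = S → prefixSet (π (j + 1)) S.card ≠ S → j = e := by
    intro S hS1 hS2
    obtain ⟨a, len, hlen1, hlenm, hchar⟩ := hint S hS1 hS2
    obtain ⟨x, hx⟩ := hS1
    obtain ⟨y, hy⟩ : ∃ y, y ∉ S := by
      by_contra h; push_neg at h; exact hS2 (Finset.eq_univ_iff_forall.mpr h)
    set S' := insert y (S.erase x) with hS'def
    have hyS' : y ∈ S' := Finset.mem_insert_self _ _
    have hScard : 1 ≤ S.card := Finset.card_pos.mpr ⟨x, hx⟩
    have hcard' : S'.card = S.card := by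
      rw [hS'def, Finset.card_insert_of_notMem (fun h => hy (Finset.mem_of_mem_erase h)),
        Finset.card_erase_of_mem hx]
      omega
    have hne : S' ≠ S := fun h => hy (h ▸ hyS')
    have hS'1 : S'.Nonempty := ⟨y, hyS'⟩
    have hcardlt : S.card < n := by
      have := Finset.card_lt_card (Finset.ssubset_univ_iff.mpr hS2)
      simpa [Finset.card_univ] using this
    have hS'2 : S' ≠ Finset.univ := by
      intro h
      have := congrArg Finset.card h
      rw [hcard', Finset.card_univ, Fintype.card_fin] at this
      omega
    obtain ⟨a', len', hl1, _, hchar'⟩ := hint S' hS'1 hS'2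
    have ha' : prefixSet (π a') S'.card = S' := (hchar' a').mpr ⟨0, by omega, by simp⟩
    have hlenlt : len < m := by
      rcases lt_or_eq_of_le hlenm with h | h
      · exact h
      · exfalso
        have hmem : prefixSet (π a') S.card = S := by
          refine (hchar a').mpr ⟨(a' - a).val, by rw [h]; exact ZMod.val_lt _, ?_⟩
          rw [ZMod.natCast_val, ZMod.cast_id]
          ring
        rw [← hcard'] at hmem
        exact hne (ha'.symm.trans hmem)
    refine ⟨a + ((len - 1 : ℕ) : ZMod m), ⟨?_, ?_⟩, ?_⟩
    · exact (hchar _).mpr ⟨len - 1, by omega, rfl⟩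
    · intro h
      exact endpoint_succ_not_mem a hlen1 hlenlt ((hchar _).mp h)
    · intro j hj hj1
      exact mem_not_succ_eq_endpoint a j ((hchar j).mp hj) (fun h => hj1 ((hchar _).mpr h))
  set f : {S : Finset (Fin n) // S.Nonempty ∧ S ≠ Finset.univ} → ZMod m :=
    fun S => Classical.choose (key S.1 S.2.1 S.2.2) with hfdef
  have hfspec : ∀ S : {S : Finset (Fin n) // S.Nonempty ∧ S ≠ Finset.univ},
      (prefixSet (π (f S)) S.1.card = S.1 ∧ prefixSet (π (f S + 1)) S.1.card ≠ S.1) ∧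
      ∀ j, prefixSet (π j) S.1.card = S.1 → prefixSet (π (j + 1)) S.1.card ≠ S.1 → j = f S :=
    fun S => Classical.choose_spec (key S.1 S.2.1 S.2.2)
  have step : ∀ j : ZMod m, ∃ t, 1 ≤ t ∧ t < n ∧
      prefixSet (π (j + 1)) t ≠ prefixSet (π j) t ∧
      ∀ t', t' ≠ t → prefixSet (π (j + 1)) t' = prefixSet (π j) t' := by
    intro j
    obtain ⟨k, hk, heq⟩ := hadj j
    refine ⟨k + 1, by omega, hk, ?_, ?_⟩
    · rw [heq]; exact prefixSet_mul_swap_ne _ hk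
    · intro t' ht'; rw [heq]; exact prefixSet_mul_swap_eq _ hk ht'
  have hinj : Function.Injective f := by
    intro S S' hSS
    obtain ⟨⟨h1, h2⟩, -⟩ := hfspec S
    obtain ⟨⟨h1', h2'⟩, -⟩ := hfspec S'
    rw [← hSS] at h1' h2'
    obtain ⟨t, -, -, -, huniq⟩ := step (f S)
    have e1 : S.1.card = t := by
      by_contra h
      exact h2 ((huniq _ h).trans h1)
    have e2 : S'.1.card = t := by
      by_contra h
      exact h2' ((huniq _ h).trans h1')
    apply Subtype.ext
    rw [← h1, ← h1', e1, e2]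
  have hsurj : Function.Surjective f := by
    intro j
    obtain ⟨k, hk, heq⟩ := hadj j
    set S := prefixSet (π j) (k + 1) with hSdef
    have hcard : S.card = k + 1 := card_prefixSet _ (by omega)
    have hS1 : S.Nonempty := Finset.card_pos.mp (by omega)
    have hS2 : S ≠ Finset.univ := by
      intro h
      have := congrArg Finset.card h
      rw [hcard, Finset.card_univ, Fintype.card_fin] at this
      omega
    refine ⟨⟨S, hS1, hS2⟩, ?_⟩
    obtain ⟨-, huniq⟩ := hfspec ⟨S, hS1, hS2⟩
    refine (huniq j (by rw [hcard]) ?_).symm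
    rw [hcard]
    show prefixSet (π (j + 1)) (k + 1) ≠ prefixSet (π j) (k + 1)
    rw [heq]
    exact prefixSet_mul_swap_ne _ hk
  have hcardeq := Fintype.card_of_bijective ⟨hinj, hsurj⟩
  rw [card_nonempty_proper n (by omega), ZMod.card] at hcardeq
  omega
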